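/- Consider differentiable models f_i : ℝ^m → ℝ and a nonnegative differentiable loss l with l(0) = l'(0) = 0. Suppose η > 0 is such that w ↦ ψ(w) − η L_i(w) is convex for every i = 1, …, T. Then for every parameter w ∈ ℝ^m and noise values v_i with y_i = f_i(w) + v_i, the SMD iterates satisfy D_ψ(w, w_T) + η Σ_{i=1}^T D_{L_i}(w, w_{i−1}) ≤ D_ψ(w, w_0) + η Σ_{i=1}^T l(v_i). In particular SMD makes the worst-case ratio (D_ψ(w, w_T) + η Σ D_{L_i}(w, w_{i−1})) / (D_ψ(w, w_0) + η Σ l(v_i)) at most 1 whenever the denominator is positive. -/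

import Mathlib

open scoped RealInnerProductSpace

lemma inner_gradient_eq {m : ℕ} (f : EuclideanSpace ℝ (Fin m) → ℝ) (x v : EuclideanSpace ℝ (Fin m)) :
    ⟪gradient f x, v⟫ = fderiv ℝ f x v := by
  rw [gradient]
  exact InnerProductSpace.toDual_symm_apply

lemma tangent_le {m : ℕ} {g : EuclideanSpace ℝ (Fin m) → ℝ} (hg : ConvexOn ℝ Set.univ g)
    (x y : EuclideanSpace ℝ (Fin m)) (hd : DifferentiableAt ℝ g x) :
    fderiv ℝ g x (y - x) ≤ g y - g x := by
  set φ : ℝ → ℝ := fun t => g (x + t • (y - x)) with hφ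
  have hc : HasDerivAt (fun t : ℝ => x + t • (y - x)) (y - x) 0 := by
    simpa using ((hasDerivAt_id (0:ℝ)).smul_const (y - x)).const_add x
  have hconv : ConvexOn ℝ Set.univ φ := by
    have h2 := hg.comp_affineMap (AffineMap.lineMap x y : ℝ →ᵃ[ℝ] EuclideanSpace ℝ (Fin m))
    have huniv : (Set.univ : Set ℝ) = (AffineMap.lineMap x y : ℝ →ᵃ[ℝ] EuclideanSpace ℝ (Fin m)) ⁻¹' Set.univ := by simp
    rw [huniv]
    suffices hφeq : φ = g ∘ (AffineMap.lineMap x y : ℝ →ᵃ[ℝ] EuclideanSpace ℝ (Fin m)) by rw [hφeq]; exact h2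
    funext t
    show g (x + t • (y - x)) = g (AffineMap.lineMap x y t)
    rw [AffineMap.lineMap_apply, vsub_eq_sub, vadd_eq_add]
    congr 1
    abel
  have h1 : HasFDerivAt g (fderiv ℝ g x) (x + (0:ℝ) • (y - x)) := by simpa using hd.hasFDerivAt
  have hderiv : HasDerivAt φ (fderiv ℝ g x (y - x)) 0 := by
    exact h1.comp_hasDerivAt 0 hc
  have hle := hconv.le_slope_of_hasDerivAt (Set.mem_univ 0) (Set.mem_univ 1) zero_lt_one hderiv
  have hs : slope φ 0 1 = g y - g x := by simp [slope, φ]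
  linarith [hs ▸ hle]

/-- Bregman-divergence-like quantity `D_g(u, u') = g(u) - g(u') - ∇g(u')ᵀ(u - u')` of a
(not necessarily convex) function `g`. -/
noncomputable def Dbreg {m : ℕ} (g : EuclideanSpace ℝ (Fin m) → ℝ)
    (u u' : EuclideanSpace ℝ (Fin m)) : ℝ :=
  g u - g u' - ⟪gradient g u', u - u'⟫

/-- upper bound part of Theorem 2: under the small-step-size condition
that `ψ - η L_i` is convex for all `i`, SMD makes the worst-case ratio at most 1. -/
theorem stmt_10 {m : ℕ} (T : ℕ) (hT : 1 ≤ T) (y : ℕ → ℝ)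
    (f : ℕ → EuclideanSpace ℝ (Fin m) → ℝ) (hf : ∀ i, Differentiable ℝ (f i))
    (l : ℝ → ℝ) (hl : Differentiable ℝ l) (hlnn : ∀ z, 0 ≤ l z)
    (hl0 : l 0 = 0) (hl'0 : deriv l 0 = 0)
    (ψ : EuclideanSpace ℝ (Fin m) → ℝ) (hψ : Differentiable ℝ ψ)
    (hψconv : StrictConvexOn ℝ Set.univ ψ)
    (L : ℕ → EuclideanSpace ℝ (Fin m) → ℝ)
    (hLdef : ∀ i u, L i u = l (y i - f i u))
    (η : ℝ) (hη : 0 < η)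
    (hstep : ∀ i ∈ Finset.range T, ConvexOn ℝ Set.univ (fun u => ψ u - η * L (i + 1) u))
    (w₀ : EuclideanSpace ℝ (Fin m))
    (w : ℕ → EuclideanSpace ℝ (Fin m)) (hw0 : w 0 = w₀)
    (hupd : ∀ i : ℕ,
      gradient ψ (w (i + 1)) = gradient ψ (w i) - η • gradient (L (i + 1)) (w i))
    (wstar : EuclideanSpace ℝ (Fin m)) (v : ℕ → ℝ)
    (hdata : ∀ i : ℕ, y (i + 1) = f (i + 1) wstar + v (i + 1)) :
    Dbreg ψ wstar (w T) + η * ∑ i ∈ Finset.range T, Dbreg (L (i + 1)) wstar (w i)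
        ≤ Dbreg ψ wstar w₀ + η * ∑ i ∈ Finset.range T, l (v (i + 1)) ∧
    (0 < Dbreg ψ wstar w₀ + η * ∑ i ∈ Finset.range T, l (v (i + 1)) →
      (Dbreg ψ wstar (w T) + η * ∑ i ∈ Finset.range T, Dbreg (L (i + 1)) wstar (w i)) /
          (Dbreg ψ wstar w₀ + η * ∑ i ∈ Finset.range T, l (v (i + 1))) ≤ 1) := by
  have hLdiff : ∀ i, Differentiable ℝ (L i) := by
    intro i
    have : L i = fun u => l (y i - f i u) := funext (hLdef i)
    rw [this]
    exact hl.comp ((differentiable_const _).sub (hf i))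
  have hLnn : ∀ i u, 0 ≤ L i u := fun i u => by rw [hLdef]; exact hlnn _
  have hLval : ∀ i : ℕ, L (i + 1) wstar = l (v (i + 1)) := by
    intro i
    rw [hLdef, hdata]
    ring_nf
  have key : ∀ i ∈ Finset.range T,
      Dbreg ψ wstar (w (i + 1)) + η * Dbreg (L (i + 1)) wstar (w i)
        ≤ Dbreg ψ wstar (w i) + η * l (v (i + 1)) := by
    intro i hi
    have hg : ConvexOn ℝ Set.univ (fun u => ψ u - η * L (i + 1) u) := hstep i hi
    have hLid : Differentiable ℝ (L (i + 1)) := hLdiff (i + 1)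
    have hgd : DifferentiableAt ℝ (fun u => ψ u - η * L (i + 1) u) (w i) :=
      ((hψ (w i)).sub ((hLid (w i)).const_mul η))
    have htan := tangent_le hg (w i) (w (i + 1)) hgd
    have hfd : fderiv ℝ (fun u => ψ u - η * L (i + 1) u) (w i)
        = fderiv ℝ ψ (w i) - η • fderiv ℝ (L (i + 1)) (w i) := by
      rw [fderiv_fun_sub (hψ (w i)) ((hLid (w i)).const_mul η), fderiv_const_mul (hLid (w i))]
    have htan' : ⟪gradient ψ (w i), w (i + 1) - w i⟫
          - η * ⟪gradient (L (i + 1)) (w i), w (i + 1) - w i⟫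
        ≤ (ψ (w (i + 1)) - η * L (i + 1) (w (i + 1))) - (ψ (w i) - η * L (i + 1) (w i)) := by
      rw [inner_gradient_eq, inner_gradient_eq]
      rw [hfd] at htan
      simpa using htan
    have hv : wstar - w (i + 1) = (wstar - w i) - (w (i + 1) - w i) := by abel
    have e2 : ∀ u : EuclideanSpace ℝ (Fin m),
        ⟪u, wstar - w (i + 1)⟫ = ⟪u, wstar - w i⟫ - ⟪u, w (i + 1) - w i⟫ := fun u => by
      rw [hv, inner_sub_right]
    have e1 : ⟪gradient ψ (w (i + 1)), wstar - w (i + 1)⟫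
        = (⟪gradient ψ (w i), wstar - w i⟫ - ⟪gradient ψ (w i), w (i + 1) - w i⟫)
          - η * (⟪gradient (L (i + 1)) (w i), wstar - w i⟫
                  - ⟪gradient (L (i + 1)) (w i), w (i + 1) - w i⟫) := by
      rw [hupd i, inner_sub_left, real_inner_smul_left, e2, e2]
    have hnn : 0 ≤ η * L (i + 1) (w (i + 1)) := mul_nonneg hη.le (hLnn _ _)
    simp only [Dbreg]
    rw [hLval i, e1]
    linarith [htan', hnn]
  have main : ∀ n, n ≤ T →
      Dbreg ψ wstar (w n) + η * ∑ i ∈ Finset.range n, Dbreg (L (i + 1)) wstar (w i)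
        ≤ Dbreg ψ wstar w₀ + η * ∑ i ∈ Finset.range n, l (v (i + 1)) := by
    intro n
    induction n with
    | zero => intro _; simp [hw0]
    | succ k ih =>
      intro hk
      have h1 := ih (Nat.le_of_succ_le hk)
      have h2 := key k (Finset.mem_range.mpr hk)
      rw [Finset.sum_range_succ, Finset.sum_range_succ, mul_add, mul_add]
      linarith
  refine ⟨main T le_rfl, fun hpos => ?_⟩
  rw [div_le_one hpos]
  exact main T le_rfl
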